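/- For any Q ∈ ℝ^n, probability vectors π, π' in the simplex Δ_n, and step size α > 0: ⟨Q, π − π'⟩ − (1/α)·KL(π' ‖ π) ≤ (α/2)·‖Q‖_∞², where KL denotes the Kullback–Leibler divergence. -/

import Mathlib

private noncomputable def pinG (t : ℝ) : ℝ := t * Real.log t - t + 1 - 3 * (t - 1) ^ 2 / (2 * t + 4)
private noncomputable def pinφ (t : ℝ) : ℝ := Real.log t - 6 * (t - 1) * (t + 5) / (2 * t + 4) ^ 2

private lemma pinG_hasDeriv {t : ℝ} (ht : 0 < t) : HasDerivAt pinG (pinφ t) t := by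
  have hv : (2 * t + 4) ≠ 0 := by nlinarith
  have h1 : HasDerivAt (fun t : ℝ => t * Real.log t) (Real.log t + 1) t :=
    Real.hasDerivAt_mul_log ht.ne'
  have h2 : HasDerivAt (fun t : ℝ => 3 * (t - 1) ^ 2) (6 * (t - 1)) t := by
    have := ((hasDerivAt_id t).sub_const 1).pow 2
    have h := this.const_mul (3 : ℝ)
    refine h.congr_deriv ?_; simp [id]; ring
  have h3 : HasDerivAt (fun t : ℝ => 2 * t + 4) 2 t := by
    simpa using ((hasDerivAt_id t).const_mul (2 : ℝ)).add_const 4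
  have hq := h2.div h3 hv
  have := ((h1.sub (hasDerivAt_id t)).add_const 1).sub hq
  refine this.congr_deriv ?_
  unfold pinφ
  field_simp
  ring

private lemma pinφ_hasDeriv {t : ℝ} (ht : 0 < t) :
    HasDerivAt pinφ (1 / t - 216 / (2 * t + 4) ^ 3) t := by
  have hv : ((2 * t + 4) ^ 2) ≠ 0 := by positivity
  have h1 : HasDerivAt Real.log (1 / t) t := by
    simpa [one_div] using Real.hasDerivAt_log ht.ne'
  have h2 : HasDerivAt (fun t : ℝ => 6 * (t - 1) * (t + 5)) (12 * t + 24) t := by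
    have := (((hasDerivAt_id t).sub_const 1).const_mul (6 : ℝ)).mul
      ((hasDerivAt_id t).add_const 5)
    refine this.congr_deriv ?_; simp [id]; try ring
  have h3 : HasDerivAt (fun t : ℝ => (2 * t + 4) ^ 2) (2 * (2 * t + 4) * 2) t := by
    have := (((hasDerivAt_id t).const_mul (2 : ℝ)).add_const 4).pow 2
    refine this.congr_deriv ?_; simp [id]; try ring
  have hq := h2.div h3 hv
  have := h1.sub hq
  refine this.congr_deriv ?_
  have h4 : (2 * t + 4) ≠ 0 := by nlinarith
  field_simp
  ring

private lemma pinφ_one : pinφ 1 = 0 := by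
  simp [pinφ]

private lemma pinG_one : pinG 1 = 0 := by
  norm_num [pinG]

private lemma pinφ_mono : MonotoneOn pinφ (Set.Ioi (0 : ℝ)) := by
  apply monotoneOn_of_hasDerivWithinAt_nonneg (convex_Ioi 0)
    (f' := fun t => 1 / t - 216 / (2 * t + 4) ^ 3)
  · exact fun t ht => (pinφ_hasDeriv ht).continuousAt.continuousWithinAt
  · intro t ht
    rw [interior_Ioi] at ht
    exact (pinφ_hasDeriv ht).hasDerivWithinAt
  · intro t ht
    rw [interior_Ioi] at ht
    have ht' : (0 : ℝ) < t := ht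
    rw [sub_nonneg, div_le_div_iff₀ (by positivity) ht']
    nlinarith [sq_nonneg (t - 1), ht'.le]

private lemma pinG_nonneg {t : ℝ} (ht : 0 < t) : 0 ≤ pinG t := by
  rcases le_total t 1 with h | h
  · have hanti : AntitoneOn pinG (Set.Ioc (0 : ℝ) 1) := by
      apply antitoneOn_of_hasDerivWithinAt_nonpos (convex_Ioc 0 1) (f' := pinφ)
      · exact fun x hx => (pinG_hasDeriv hx.1).continuousAt.continuousWithinAt
      · intro x hx
        rw [interior_Ioc] at hx
        exact (pinG_hasDeriv hx.1).hasDerivWithinAt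
      · intro x hx
        rw [interior_Ioc] at hx
        have := pinφ_mono (Set.mem_Ioi.mpr hx.1) (Set.mem_Ioi.mpr one_pos) hx.2.le
        rwa [pinφ_one] at this
    have := hanti ⟨ht, h⟩ ⟨one_pos, le_refl 1⟩ h
    rwa [pinG_one] at this
  · have hmono : MonotoneOn pinG (Set.Ici (1 : ℝ)) := by
      apply monotoneOn_of_hasDerivWithinAt_nonneg (convex_Ici 1) (f' := pinφ)
      · exact fun x hx => (pinG_hasDeriv (lt_of_lt_of_le one_pos hx)).continuousAt.continuousWithinAt
      · intro x hx
        rw [interior_Ici] at hx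
        exact (pinG_hasDeriv (lt_trans one_pos hx)).hasDerivWithinAt
      · intro x hx
        rw [interior_Ici] at hx
        have := pinφ_mono (Set.mem_Ioi.mpr one_pos) (Set.mem_Ioi.mpr (lt_trans one_pos hx)) hx.le
        rwa [pinφ_one] at this
    have := hmono (Set.mem_Ici.mpr (le_refl 1)) (Set.mem_Ici.mpr h) h
    rwa [pinG_one] at this

/-- Pointwise Pinsker bound: for `x ≥ 0`, `y > 0`,
`3(x−y)²/(2x+4y) ≤ x log(x/y) − x + y`. -/
private lemma pointwise_pinsker {x y : ℝ} (hx : 0 ≤ x) (hy : 0 < y) :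
    3 * (x - y) ^ 2 / (2 * x + 4 * y) ≤ x * Real.log (x / y) - x + y := by
  rcases eq_or_lt_of_le hx with h | hxpos
  · rw [← h]
    simp only [zero_mul, zero_sub, sub_zero, zero_add]
    rw [div_le_iff₀ (by linarith)]
    nlinarith
  · have hG := pinG_nonneg (t := x / y) (by positivity)
    unfold pinG at hG
    have key : x * Real.log (x / y) - x + y - 3 * (x - y) ^ 2 / (2 * x + 4 * y) =
        y * ((x / y) * Real.log (x / y) - (x / y) + 1 - 3 * (x / y - 1) ^ 2 / (2 * (x / y) + 4)) := by
      have h2 : (2 * x + 4 * y) ≠ 0 := by positivity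
      field_simp
    nlinarith [mul_nonneg hy.le hG]

/-- One-step estimate (eq. (17)): for `Q ∈ ℝⁿ`, probability vectors `π, π'` on the
simplex (with `π` strictly positive so the KL divergence is finite), and `α > 0`,
`⟨Q, π − π'⟩ − (1/α)·KL(π' ‖ π) ≤ (α/2)·‖Q‖_∞²`. -/
theorem stmt_4 {n : ℕ} (hn : 0 < n) (Q π π' : Fin n → ℝ) (α : ℝ) (hα : 0 < α)
    (hπ_pos : ∀ i, 0 < π i) (hπ_sum : ∑ i, π i = 1)
    (hπ'_nonneg : ∀ i, 0 ≤ π' i) (hπ'_sum : ∑ i, π' i = 1) :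
    (∑ i, Q i * (π i - π' i)) -
      (1 / α) * (∑ i, π' i * Real.log (π' i / π i)) ≤
    (α / 2) * (Finset.univ.sup' (Finset.univ_nonempty_iff.mpr ⟨⟨0, hn⟩⟩)
      fun i => |Q i|) ^ 2 := by
  set M : ℝ := Finset.univ.sup' (Finset.univ_nonempty_iff.mpr ⟨⟨0, hn⟩⟩) fun i => |Q i| with hM
  have hMabs : ∀ i, |Q i| ≤ M := fun i => Finset.le_sup' (fun j => |Q j|) (Finset.mem_univ i)
  have hM0 : 0 ≤ M := le_trans (abs_nonneg _) (hMabs ⟨0, hn⟩)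
  set t : ℝ := ∑ i, |π i - π' i| with htdef
  have ht0 : 0 ≤ t := Finset.sum_nonneg fun i _ => abs_nonneg _
  -- Hölder step
  have hHolder : (∑ i, Q i * (π i - π' i)) ≤ M * t := by
    rw [htdef, Finset.mul_sum]
    apply Finset.sum_le_sum
    intro i _
    calc Q i * (π i - π' i) ≤ |Q i * (π i - π' i)| := le_abs_self _
      _ = |Q i| * |π i - π' i| := abs_mul _ _
      _ ≤ M * |π i - π' i| := by
          exact mul_le_mul_of_nonneg_right (hMabs i) (abs_nonneg _)
  -- Pinsker step
  have hKL : t ^ 2 / 2 ≤ ∑ i, π' i * Real.log (π' i / π i) := by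
    have hw : ∀ i ∈ Finset.univ, (0:ℝ) < (2 * π' i + 4 * π i) / 3 := by
      intro i _
      have := hπ'_nonneg i; have := hπ_pos i
      positivity
    have hCS := Finset.sq_sum_div_le_sum_sq_div Finset.univ (fun i => |π i - π' i|) hw
    have hsumw : ∑ i, (2 * π' i + 4 * π i) / 3 = 2 := by
      rw [← Finset.sum_div, Finset.sum_add_distrib, ← Finset.mul_sum, ← Finset.mul_sum,
        hπ_sum, hπ'_sum]
      norm_num
    rw [hsumw] at hCS
    have hpt : ∑ i, |π i - π' i| ^ 2 / ((2 * π' i + 4 * π i) / 3)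
        ≤ ∑ i, (π' i * Real.log (π' i / π i) - π' i + π i) := by
      apply Finset.sum_le_sum
      intro i _
      have h := pointwise_pinsker (hπ'_nonneg i) (hπ_pos i)
      have heq : |π i - π' i| ^ 2 / ((2 * π' i + 4 * π i) / 3)
          = 3 * (π' i - π i) ^ 2 / (2 * π' i + 4 * π i) := by
        have hne : (2 * π' i + 4 * π i) ≠ 0 := by
          have := hπ'_nonneg i; have := hπ_pos i; positivity
        rw [sq_abs]
        field_simp
        ring
      rw [heq]
      linarith
    have hsum3 : ∑ i, (π' i * Real.log (π' i / π i) - π' i + π i)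
        = ∑ i, π' i * Real.log (π' i / π i) := by
      rw [Finset.sum_add_distrib, Finset.sum_sub_distrib, hπ_sum, hπ'_sum]
      ring
    rw [hsum3] at hpt
    calc t ^ 2 / 2 ≤ ∑ i, |π i - π' i| ^ 2 / ((2 * π' i + 4 * π i) / 3) := hCS
      _ ≤ _ := hpt
  -- complete the square
  have hKL' : (1 / α) * (t ^ 2 / 2) ≤ (1 / α) * ∑ i, π' i * Real.log (π' i / π i) :=
    mul_le_mul_of_nonneg_left hKL (by positivity)
  have hfinal : M * t - (1 / α) * (t ^ 2 / 2) ≤ (α / 2) * M ^ 2 := by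
    have hinv : (1 / α) * α = 1 := by field_simp
    nlinarith [sq_nonneg (α * M - t), mul_pos hα hα, sq_nonneg t, mul_nonneg hM0 ht0]
  linarith
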